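/- For every d > 1 and every ξ ∈ F_q*, there exists a monic irreducible polynomial 𝔭 of degree d in F_q[T] whose constant term equals ξ. -/

import Mathlib

open Polynomial

private lemma hm_pow_pow_mul {M : Type*} [Monoid M] (α : M) (q a : ℕ)
    (ha : α ^ q ^ a = α) : ∀ k : ℕ, α ^ q ^ (a * k) = α := by
  intro k
  induction k with
  | zero => simp
  | succ n ih => rw [Nat.mul_succ, pow_add, pow_mul, ih, ha]

private lemma hm_pow_pow_gcd {M : Type*} [Monoid M] (α : M) (q : ℕ) :
    ∀ s t : ℕ, α ^ q ^ s = α → α ^ q ^ t = α → α ^ q ^ Nat.gcd s t = α := by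
  intro s t
  induction s, t using Nat.gcd.induction with
  | H0 n => intro _ h; simpa using h
  | H1 m n hm ih =>
    intro hs ht
    rw [Nat.gcd_rec]
    refine ih ?_ hs
    have key : α ^ q ^ (n % m) = α := by
      calc α ^ q ^ (n % m) = (α ^ q ^ (m * (n / m))) ^ q ^ (n % m) := by
            rw [hm_pow_pow_mul α q m hs (n / m)]
        _ = α ^ (q ^ (m * (n / m)) * q ^ (n % m)) := by rw [pow_mul, pow_mul]
        _ = α ^ q ^ (m * (n / m) + n % m) := by rw [pow_add]
        _ = α ^ q ^ n := by rw [Nat.mul_comm, Nat.div_add_mod' n m]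
        _ = α := ht
    exact key

private lemma hm_add_pow_q_pow (Fq : Type*) [Field Fq] [Fintype Fq]
    {K : Type*} [Field K] [Algebra Fq K] (s : ℕ) (x y : K) :
    (x + y) ^ (Fintype.card Fq) ^ s = x ^ (Fintype.card Fq) ^ s + y ^ (Fintype.card Fq) ^ s := by
  obtain ⟨n, hp, hcard⟩ := FiniteField.card Fq (ringChar Fq)
  haveI : Fact (Nat.Prime (ringChar Fq)) := ⟨hp⟩
  haveI : CharP K (ringChar Fq) :=
    charP_of_injective_algebraMap (algebraMap Fq K).injective _
  rw [hcard, ← pow_mul]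
  exact add_pow_char_pow x y (ringChar Fq) _

/-- Hansen–Mullen: for every `d > 1` and every nonzero `ξ ∈ F_q`, there exists a monic
irreducible polynomial `𝔭` of degree `d` in `F_q[T]` whose constant term equals `ξ`. -/
theorem hansen_mullen_prescribed_constant_term
    (Fq : Type*) [Field Fq] [Fintype Fq]
    (d : ℕ) (hd : 1 < d) (ξ : Fq) (hξ : ξ ≠ 0) :
    ∃ 𝔭 : Polynomial Fq, 𝔭.Monic ∧ Irreducible 𝔭 ∧ 𝔭.natDegree = d ∧ 𝔭.coeff 0 = ξ := by
  classical
  set q := Fintype.card Fq with hq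
  have hq1 : 1 < q := Fintype.one_lt_card
  have hd0 : d ≠ 0 := by omega
  have hqd1 : 1 < q ^ d := Nat.one_lt_pow hd0 hq1
  set f : Polynomial Fq := X ^ q ^ d - X with hf
  let K := f.SplittingField
  haveI : FiniteDimensional Fq K := by dsimp only [K]; infer_instance
  haveI : Finite K := Module.finite_of_finite Fq
  haveI : Fintype K := Fintype.ofFinite K
  have hfne : f ≠ 0 := FiniteField.X_pow_card_pow_sub_X_ne_zero Fq hd0 hq1
  -- every element of K is a root of X^(q^d) - X
  have hall : ∀ x : K, x ^ q ^ d = x := by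
    have hQ0 : q ^ d ≠ 0 := by positivity
    let S : Subalgebra Fq K :=
    { carrier := {y : K | y ^ q ^ d = y}
      mul_mem' := fun {a b} ha hb => by
        simp only [Set.mem_setOf_eq] at *
        rw [mul_pow, ha, hb]
      add_mem' := fun {a b} ha hb => by
        simp only [Set.mem_setOf_eq] at *
        rw [hm_add_pow_q_pow, ha, hb]
      one_mem' := one_pow _
      zero_mem' := by
        simp only [Set.mem_setOf_eq]
        exact zero_pow (by positivity)
      algebraMap_mem' := fun r => by
        simp only [Set.mem_setOf_eq]
        rw [← map_pow, FiniteField.pow_card_pow] }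
    have hT : (⊤ : Subalgebra Fq K) ≤ S := by
      rw [← Polynomial.SplittingField.adjoin_rootSet f]
      apply Algebra.adjoin_le
      intro y hy
      rw [Polynomial.mem_rootSet] at hy
      have h2 := hy.2
      simp only [hf, map_sub, map_pow, aeval_X, sub_eq_zero] at h2
      exact h2
    intro x
    exact hT (show x ∈ (⊤ : Subalgebra Fq K) from Algebra.mem_top)
  -- the cardinality of K
  have hcard : Fintype.card K = q ^ d := by
    apply le_antisymm
    · -- every element is a root of the map of f
      have hmapne : f.map (algebraMap Fq K) ≠ 0 :=
        (Polynomial.map_ne_zero_iff (algebraMap Fq K).injective).2 hfne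
      have hsub : Finset.univ ⊆ (f.map (algebraMap Fq K)).roots.toFinset := by
        intro x _
        rw [Multiset.mem_toFinset, Polynomial.mem_roots hmapne]
        simp only [hf, Polynomial.map_sub, Polynomial.map_pow, Polynomial.map_X,
          Polynomial.IsRoot.def, Polynomial.eval_sub, Polynomial.eval_pow, Polynomial.eval_X]
        rw [hall x, sub_self]
      calc Fintype.card K = Finset.univ.card := Finset.card_univ.symm
        _ ≤ (f.map (algebraMap Fq K)).roots.toFinset.card := Finset.card_le_card hsub
        _ ≤ (f.map (algebraMap Fq K)).roots.card := Multiset.toFinset_card_le _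
        _ ≤ (f.map (algebraMap Fq K)).natDegree := Polynomial.card_roots' _
        _ = f.natDegree := Polynomial.natDegree_map _
        _ = q ^ d := FiniteField.X_pow_card_pow_sub_X_natDegree_eq Fq hd0 hq1
    · -- separability: f has q^d distinct roots in K
      obtain ⟨n, hp, hcardq⟩ := FiniteField.card Fq (ringChar Fq)
      haveI : Fact (Nat.Prime (ringChar Fq)) := ⟨hp⟩
      have hdvd : ringChar Fq ∣ q ^ d := by
        rw [hq, hcardq] at *
        exact dvd_pow (dvd_pow_self _ (by exact_mod_cast n.ne_zero)) hd0
      have hsep : f.Separable := galois_poly_separable (ringChar Fq) (q ^ d) hdvd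
      have hkey : Fintype.card (f.rootSet K) = f.natDegree :=
        Polynomial.card_rootSet_eq_natDegree hsep (Polynomial.SplittingField.splits f)
      have : Fintype.card (f.rootSet K) ≤ Fintype.card K :=
        Fintype.card_le_of_injective _ Subtype.val_injective
      rw [hkey, FiniteField.X_pow_card_pow_sub_X_natDegree_eq Fq hd0 hq1] at this
      exact this
  have hrank : Module.finrank Fq K = d := by
    have h2 := Module.card_eq_pow_finrank (K := Fq) (V := K)
    rw [hcard, ← hq] at h2
    exact (Nat.pow_right_injective hq1 h2).symm
  -- the geometric sum m
  set m : ℕ := ∑ i ∈ Finset.range d, q ^ i with hmdef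
  have hm : (q - 1) * m = q ^ d - 1 := by
    have : ((q : ℤ) - 1) * (∑ i ∈ Finset.range d, (q : ℤ) ^ i) = (q : ℤ) ^ d - 1 := by
      rw [mul_comm]; exact geom_sum_mul (q : ℤ) d
    have hcast : ((q - 1 : ℕ) : ℤ) * ((m : ℕ) : ℤ) = (((q ^ d - 1 : ℕ)) : ℤ) := by
      push_cast [Nat.cast_sub (le_of_lt hq1), Nat.cast_sub (le_of_lt hqd1), hmdef]
      exact this
    exact_mod_cast hcast
  have hm1 : 1 ≤ m := by
    rw [hmdef]
    calc 1 = q ^ 0 := (pow_zero q).symm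
      _ ≤ ∑ i ∈ Finset.range d, q ^ i :=
        Finset.single_le_sum (f := fun i => q ^ i) (fun i _ => Nat.zero_le _)
          (Finset.mem_range.2 (by omega))
  -- the target constant c
  set c : K := algebraMap Fq K ((-1) ^ d * ξ) with hcdef
  have hy0 : ((-1 : Fq)) ^ d * ξ ≠ 0 := by
    apply mul_ne_zero _ hξ
    exact pow_ne_zero _ (by norm_num)
  have hc0 : c ≠ 0 := by
    rw [hcdef]
    simpa using hy0
  -- find a solution α₀ with α₀ ^ m = c, using a generator of Kˣ
  obtain ⟨g, hg⟩ := IsCyclic.exists_monoid_generator (α := Kˣ)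
  have hordg : orderOf g = q ^ d - 1 := by
    have := orderOf_eq_card_of_forall_mem_zpowers (g := g)
      (fun x => mem_powers_iff_mem_zpowers.1 (hg x) )
    rw [this, Nat.card_eq_fintype_card, Fintype.card_units, hcard]
  set u : Kˣ := Units.mk0 c hc0 with hu
  have hupow : u ^ (q - 1) = 1 := by
    apply Units.ext
    rw [Units.val_pow_eq_pow_val, hu, Units.val_mk0, Units.val_one, hcdef, ← map_pow,
      FiniteField.pow_card_sub_one_eq_one _ hy0, map_one]
  obtain ⟨t, hgt'⟩ := hg u
  have hgt : g ^ t = u := hgt'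
  have hdvd_t : m ∣ t := by
    have h1 : orderOf g ∣ t * (q - 1) := by
      apply orderOf_dvd_of_pow_eq_one
      rw [pow_mul, hgt, hupow]
    rw [hordg, ← hm] at h1
    have hq1' : 0 < q - 1 := by omega
    have h2 : (q - 1) * m ∣ (q - 1) * t := by
      rwa [mul_comm t (q - 1)] at h1
    exact (Nat.mul_dvd_mul_iff_left hq1').1 h2
  obtain ⟨k, hk⟩ := hdvd_t
  set v : Kˣ := g ^ k with hv
  have hvm : (v : K) ^ m = c := by
    rw [← Units.val_pow_eq_pow_val, hv, ← pow_mul, mul_comm k m, ← hk, hgt, hu, Units.val_mk0]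
  -- the element h of order m
  set h : Kˣ := g ^ (q - 1) with hh
  have hordh : orderOf h = m := by
    rw [hh, orderOf_pow, hordg, ← hm]
    have : Nat.gcd ((q - 1) * m) (q - 1) = q - 1 := Nat.gcd_eq_right (Dvd.intro m rfl)
    rw [this, Nat.mul_div_cancel_left m (by omega : 0 < q - 1)]
  -- the solution set S
  set S : Finset K := Finset.univ.filter (fun x : K => x ^ m = c) with hS
  have hmS : m ≤ S.card := by
    rw [← Finset.card_range m]
    apply Finset.card_le_card_of_injOn (fun i => ((v * h ^ i : Kˣ) : K))
    · intro i hi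
      rw [hS, Finset.mem_coe, Finset.mem_filter]
      refine ⟨Finset.mem_univ _, ?_⟩
      have h1 : (v * h ^ i) ^ m = v ^ m := by
        have hm1' : h ^ m = 1 := by rw [← hordh]; exact pow_orderOf_eq_one h
        have h2 : (h ^ i) ^ m = 1 := by
          rw [← pow_mul, mul_comm, pow_mul, hm1', one_pow]
        rw [mul_pow, h2, mul_one]
      rw [← Units.val_pow_eq_pow_val, h1, Units.val_pow_eq_pow_val, hvm]
    · intro i hi j hj hij
      have : (v * h ^ i) = (v * h ^ j) := Units.ext hij
      have h2 : h ^ i = h ^ j := by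
        exact mul_left_cancel this
      rw [Finset.mem_coe, Finset.mem_range] at hi hj
      exact pow_injOn_Iio_orderOf (by simpa [hordh] using hi) (by simpa [hordh] using hj) h2
  -- there is α ∈ S avoiding all proper subfields
  have hex : ∃ α ∈ S, ∀ e ∈ Nat.properDivisors d, α ^ q ^ e ≠ α := by
    by_contra hcon
    push_neg at hcon
    have hsub : S ⊆ (Nat.properDivisors d).biUnion
        (fun e => Finset.univ.filter (fun x : K => x ^ q ^ e = x)) := by
      intro x hx
      obtain ⟨e, he, hxe⟩ := hcon x hx
      exact Finset.mem_biUnion.2 ⟨e, he, Finset.mem_filter.2 ⟨Finset.mem_univ _, hxe⟩⟩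
    have hbound : ∀ e ∈ Nat.properDivisors d,
        (Finset.univ.filter (fun x : K => x ^ q ^ e = x)).card ≤ q ^ e := by
      intro e he
      have he0 : e ≠ 0 := by
        rcases Nat.mem_properDivisors.1 he with ⟨hdvd, hlt⟩
        rintro rfl
        rw [Nat.zero_dvd] at hdvd
        omega
      have hgne : (X ^ q ^ e - X : K[X]) ≠ 0 :=
        FiniteField.X_pow_card_pow_sub_X_ne_zero K he0 hq1
      have hsub2 : Finset.univ.filter (fun x : K => x ^ q ^ e = x) ⊆
          (X ^ q ^ e - X : K[X]).roots.toFinset := by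
        intro x hx
        rw [Finset.mem_filter] at hx
        rw [Multiset.mem_toFinset, Polynomial.mem_roots hgne]
        simp only [Polynomial.IsRoot.def, Polynomial.eval_sub, Polynomial.eval_pow,
          Polynomial.eval_X]
        rw [hx.2, sub_self]
      calc (Finset.univ.filter (fun x : K => x ^ q ^ e = x)).card
          ≤ (X ^ q ^ e - X : K[X]).roots.toFinset.card := Finset.card_le_card hsub2
        _ ≤ (X ^ q ^ e - X : K[X]).roots.card := Multiset.toFinset_card_le _
        _ ≤ (X ^ q ^ e - X : K[X]).natDegree := Polynomial.card_roots' _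
        _ = q ^ e := FiniteField.X_pow_card_pow_sub_X_natDegree_eq K he0 hq1
    have hup : S.card ≤ ∑ e ∈ Nat.properDivisors d, q ^ e :=
      le_trans (Finset.card_le_card hsub)
        (le_trans (Finset.card_biUnion_le) (Finset.sum_le_sum hbound))
    have hlt : ∑ e ∈ Nat.properDivisors d, q ^ e < m := by
      have hsubset : Nat.properDivisors d ⊆ Finset.Ico 1 d := by
        intro e he
        rcases Nat.mem_properDivisors.1 he with ⟨hdvd, hlt⟩
        refine Finset.mem_Ico.2 ⟨?_, hlt⟩
        by_contra h0
        push_neg at h0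
        interval_cases e
        rw [Nat.zero_dvd] at hdvd
        omega
      calc ∑ e ∈ Nat.properDivisors d, q ^ e ≤ ∑ e ∈ Finset.Ico 1 d, q ^ e :=
            Finset.sum_le_sum_of_subset hsubset
        _ < q ^ 0 + ∑ e ∈ Finset.Ico 1 d, q ^ e := by
            have : 0 < q ^ 0 := by norm_num
            omega
        _ = ∑ e ∈ Finset.range d, q ^ e := by
            rw [Finset.range_eq_Ico, ← Finset.sum_eq_sum_Ico_succ_bot (by omega : 0 < d)]
        _ = m := hmdef.symm
    omega
  obtain ⟨α, hαS, hαe⟩ := hex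
  have hαm : α ^ m = c := (Finset.mem_filter.1 hαS).2
  -- no small pseudo-period: α ^ q ^ s ≠ α for 0 < s < d
  have hnofix : ∀ s : ℕ, 0 < s → s < d → α ^ q ^ s ≠ α := by
    intro s hs0 hsd hfix
    have hg : α ^ q ^ Nat.gcd s d = α := hm_pow_pow_gcd α q s d hfix (hall α)
    have hgd : Nat.gcd s d ∈ Nat.properDivisors d := by
      rw [Nat.mem_properDivisors]
      constructor
      · exact Nat.gcd_dvd_right s d
      · calc Nat.gcd s d ≤ s := Nat.le_of_dvd hs0 (Nat.gcd_dvd_left s d)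
          _ < d := hsd
    exact hαe _ hgd hg
  -- the minimal polynomial of α has degree d
  have hint : IsIntegral Fq α := IsIntegral.of_finite Fq α
  have hedvd : (minpoly Fq α).natDegree ∣ d := hrank ▸ minpoly.degree_dvd hint
  have hepos : 0 < (minpoly Fq α).natDegree := minpoly.natDegree_pos hint
  have hedeg : (minpoly Fq α).natDegree = d := by
    by_contra hne
    have helt : (minpoly Fq α).natDegree < d :=
      lt_of_le_of_ne (Nat.le_of_dvd (by omega) hedvd) hne
    -- α lies in the subfield Fq⟮α⟯ of cardinality q ^ e
    set e := (minpoly Fq α).natDegree with he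
    haveI : FiniteDimensional Fq (IntermediateField.adjoin Fq {α} : IntermediateField Fq K) :=
      IntermediateField.adjoin.finiteDimensional hint
    have hrankL : Module.finrank Fq (IntermediateField.adjoin Fq {α} : IntermediateField Fq K)
        = e := IntermediateField.adjoin.finrank hint
    haveI : Fintype (IntermediateField.adjoin Fq {α} : IntermediateField Fq K) :=
      Fintype.ofFinite _
    have hcardL : Fintype.card (IntermediateField.adjoin Fq {α} : IntermediateField Fq K)
        = q ^ e := by
      rw [Module.card_eq_pow_finrank (K := Fq), hrankL, hq]
    have hmem : α ∈ (IntermediateField.adjoin Fq {α} : IntermediateField Fq K) :=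
      IntermediateField.mem_adjoin_simple_self Fq α
    have hpc := FiniteField.pow_card (⟨α, hmem⟩ :
      (IntermediateField.adjoin Fq {α} : IntermediateField Fq K))
    rw [hcardL] at hpc
    have hfix : α ^ q ^ e = α := by
      have := congrArg (Subtype.val) hpc
      simpa using this
    exact hnofix e hepos helt hfix
  -- the Frobenius algebra endomorphism x ↦ x ^ q
  have hq0 : 0 < q := by omega
  let Φ : K →ₐ[Fq] K :=
  { toFun := fun x => x ^ q
    map_one' := one_pow q
    map_mul' := fun x y => mul_pow x y q
    map_zero' := zero_pow (by omega)
    map_add' := fun x y => by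
      have := hm_add_pow_q_pow Fq (K := K) 1 x y
      simp only [pow_one] at this
      exact this
    commutes' := fun r => by
      rw [← map_pow, FiniteField.pow_card] }
  -- all conjugates α ^ q ^ i are roots of the minimal polynomial
  have hroot : ∀ i : ℕ, (Polynomial.aeval (α ^ q ^ i)) (minpoly Fq α) = 0 := by
    intro i
    induction i with
    | zero =>
      rw [pow_zero, pow_one]
      exact minpoly.aeval Fq α
    | succ n ih =>
      have hstep : α ^ q ^ (n + 1) = Φ (α ^ q ^ n) := by
        show α ^ q ^ (n + 1) = (α ^ q ^ n) ^ q
        rw [← pow_mul, ← pow_succ]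
      rw [hstep, Polynomial.aeval_algHom_apply, ih, map_zero]
  -- the conjugates are pairwise distinct
  have hinj : Set.InjOn (fun i => α ^ q ^ i) (Finset.range d) := by
    have hpowinj : ∀ i : ℕ, Function.Injective (fun x : K => x ^ q ^ i) := by
      intro i
      apply Function.LeftInverse.injective (g := fun y : K => y ^ q ^ (i * (d - 1)))
      intro x
      show (x ^ q ^ i) ^ q ^ (i * (d - 1)) = x
      rw [← pow_mul, ← pow_add]
      have : i + i * (d - 1) = d * i := by
        cases d with
        | zero => omega
        | succ n =>
          simp only [Nat.succ_sub_one]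
          ring
      rw [this]
      exact hm_pow_pow_mul x q d (hall x) i
    intro i hi j hj hij
    simp only [Finset.coe_range, Set.mem_Iio] at hi hj
    by_contra hne
    rcases Nat.lt_or_ge i j with hlt | hge
    · have : α ^ q ^ j = (α ^ q ^ (j - i)) ^ q ^ i := by
        rw [← pow_mul, ← pow_add, show j - i + i = j from by omega]
      have h2 : α ^ q ^ i = (α ^ q ^ (j - i)) ^ q ^ i := by rw [← this]; exact hij
      have h3 : α = α ^ q ^ (j - i) := hpowinj i h2
      exact hnofix (j - i) (by omega) (by omega) h3.symm
    · have hlt : j < i := by omega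
      have : α ^ q ^ i = (α ^ q ^ (i - j)) ^ q ^ j := by
        rw [← pow_mul, ← pow_add, show i - j + j = i from by omega]
      have h2 : α ^ q ^ j = (α ^ q ^ (i - j)) ^ q ^ j := by rw [← this]; exact hij.symm
      have h3 : α = α ^ q ^ (i - j) := hpowinj j h2
      exact hnofix (i - j) (by omega) (by omega) h3.symm
  -- the multiset of conjugates
  set M : Multiset K := (Finset.range d).val.map (fun i => α ^ q ^ i) with hM
  have hMnodup : M.Nodup := by
    apply Multiset.Nodup.map_on _ (Finset.range d).nodup
    intro i hi j hj hij
    exact hinj (by simpa using hi) (by simpa using hj) hij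
  have hMcard : Multiset.card M = d := by rw [hM, Multiset.card_map]; simp
  -- the mapped minimal polynomial
  set mp : Polynomial K := (minpoly Fq α).map (algebraMap Fq K) with hmp
  have hmonic : (minpoly Fq α).Monic := minpoly.monic hint
  have hmpmonic : mp.Monic := hmonic.map _
  have hmpne : mp ≠ 0 := hmpmonic.ne_zero
  have hmpdeg : mp.natDegree = d := by rw [hmp, Polynomial.natDegree_map, hedeg]
  have hMle : M ≤ mp.roots := by
    refine Multiset.le_iff_count.2 (fun a => ?_)
    by_cases ha : a ∈ M
    · have h1 : M.count a = 1 := Multiset.count_eq_one_of_mem hMnodup ha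
      rw [h1, Multiset.one_le_count_iff_mem, Polynomial.mem_roots hmpne]
      obtain ⟨i, _, rfl⟩ := Multiset.mem_map.1 ha
      show mp.IsRoot _
      rw [Polynomial.IsRoot.def, hmp, Polynomial.eval_map, ← Polynomial.aeval_def]
      exact hroot i
    · rw [Multiset.count_eq_zero_of_notMem ha]
      exact Nat.zero_le _
  have hroots_eq : mp.roots = M := by
    symm
    apply Multiset.eq_of_le_of_card_le hMle
    rw [hMcard]
    calc Multiset.card mp.roots ≤ mp.natDegree := Polynomial.card_roots' mp
      _ = d := hmpdeg
  have hsplits : Polynomial.Splits mp := by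
    rw [Polynomial.splits_iff_card_roots, hroots_eq, hMcard, hmpdeg]
  have hprod : mp = (mp.roots.map fun a => Polynomial.X - Polynomial.C a).prod :=
    hsplits.eq_prod_roots_of_monic hmpmonic
  -- compute the constant coefficient
  have hcoeff : mp.coeff 0 = (-1) ^ d * α ^ m := by
    conv_lhs => rw [hprod]
    rw [Polynomial.coeff_zero_eq_eval_zero, Polynomial.eval_multiset_prod, hroots_eq, hM]
    simp only [Multiset.map_map, Function.comp_apply, Polynomial.eval_sub, Polynomial.eval_X,
      Polynomial.eval_C, zero_sub]
    rw [← Finset.prod_eq_multiset_prod]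
    have hcong : ∀ i ∈ Finset.range d, -(α ^ q ^ i) = (-1) * α ^ q ^ i := fun i _ => by ring
    rw [Finset.prod_congr rfl hcong, Finset.prod_mul_distrib, Finset.prod_const,
      Finset.card_range, Finset.prod_pow_eq_pow_sum, ← hmdef]
  refine ⟨minpoly Fq α, hmonic, minpoly.irreducible hint, hedeg, ?_⟩
  apply (algebraMap Fq K).injective
  have h1 : algebraMap Fq K ((minpoly Fq α).coeff 0) = mp.coeff 0 :=
    (Polynomial.coeff_map (algebraMap Fq K) 0).symm
  rw [h1, hcoeff, hαm, hcdef, ← map_one (algebraMap Fq K), ← map_neg, ← map_pow, ← map_mul]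
  congr 1
  rw [← mul_assoc, ← mul_pow]
  norm_num
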